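/- Let A ⋊_α^σ G be a category crossed product such that σ is a functor from G to the category of rings (i.e. σ_{st} = σ_s ∘ σ_t for composable pairs). Let R be a congruence relation on G such that {A, G/R, σ([·]), α([·],[·])} is a well-defined crossed system. If I is the twosided ideal of A ⋊_α^σ G generated by an element Σ_{s∈G} a_s u_s with a_s = 0 whenever s is not congruent to any identity morphism, and Σ_{s ∈ [e]} a_s = 0 for every object e, then A ∩ I = {0}. -/

import Mathlib

open CategoryTheory

/-- The type of morphisms of a category `G`, bundled with domain and codomain. -/
abbrev CMor (G : Type*) [Category G] := Σ e f : G, e ⟶ f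

/-- Transport along an equality of objects, as a ring homomorphism. -/
def castRH {G : Type*} (A : G → Type*) [∀ e, Ring (A e)]
    {e f : G} (h : e = f) : A e →+* A f := by subst h; exact RingHom.id _

/-- The carrier of the category crossed product `A ⋊_α^σ G`: finitely supported
formal sums `Σ_s a_s u_s` with `a_s ∈ A_{c(s)}`. -/
abbrev CP {G : Type*} [Category G] (A : G → Type*) [∀ e, Ring (A e)] :=
  Π₀ p : CMor G, A p.2.1

open Classical in
/-- The multiplication of the category crossed product:
`(a u_s)(b u_t) = a σ_s(b) α(s,t) u_{st}` when `d(s) = c(t)`, else `0`. -/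
noncomputable def catMul {G : Type*} [Category G] {A : G → Type*} [∀ e, Ring (A e)]
    (σ : ∀ e f : G, (e ⟶ f) → (A e →+* A f))
    (α : ∀ e f g : G, (f ⟶ g) → (e ⟶ f) → A g)
    (x y : CP A) : CP A :=
  x.sum fun p a => y.sum fun q b =>
    if h : q.2.1 = p.1 then
      DFinsupp.single (⟨q.1, p.2.1, (q.2.2 ≫ eqToHom h) ≫ p.2.2⟩ : CMor G)
        (a * σ p.1 p.2.1 p.2.2 (castRH A h b) * α q.1 p.1 p.2.1 p.2.2 (q.2.2 ≫ eqToHom h))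
    else 0

open Classical in
/-- `a u_s`, the formal sum supported on a single morphism. -/
noncomputable def catSingle {G : Type*} [Category G] {A : G → Type*} [∀ e, Ring (A e)]
    (p : CMor G) (a : A p.2.1) : CP A := DFinsupp.single p a

/-- `I` is a twosided ideal of the category crossed product `A ⋊_α^σ G`. -/
def IsCrossedIdeal {G : Type*} [Category G] {A : G → Type*} [∀ e, Ring (A e)]
    (σ : ∀ e f : G, (e ⟶ f) → (A e →+* A f))
    (α : ∀ e f g : G, (f ⟶ g) → (e ⟶ f) → A g)
    (I : Set (CP A)) : Prop :=
  (0 : CP A) ∈ I ∧ (∀ x y, x ∈ I → y ∈ I → x + y ∈ I) ∧ (∀ x, x ∈ I → -x ∈ I) ∧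
    ∀ x r, x ∈ I → catMul σ α r x ∈ I ∧ catMul σ α x r ∈ I


section Aux

/-- Killing lemma: if all class-sums of `b` vanish and `F` is defined on classes,
then the total sum of `F ⟦t⟧ (b t)` vanishes. -/
lemma classSum_kill {H M N : Type*} [AddCommMonoid M] [AddCommMonoid N]
    (S : Setoid H) (b : H → M) (hb : (Function.support b).Finite)
    (hsum : ∀ s : H, (∑ᶠ (t : H) (_ : S.r t s), b t) = 0)
    (F : Quotient S → (M →+ N)) :
    (∑ᶠ t : H, F (Quotient.mk S t) (b t)) = 0 := by
  classical
  have hsub : Function.support (fun t => F (Quotient.mk S t) (b t)) ⊆ hb.toFinset := by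
    intro t ht
    simp only [Function.mem_support] at ht
    simp only [Set.Finite.coe_toFinset, Set.Finite.mem_toFinset, Function.mem_support]
    intro h0
    exact ht (by rw [h0]; simp)
  rw [finsum_eq_sum_of_support_subset _ hsub,
    ← Finset.sum_fiberwise_of_maps_to (g := Quotient.mk S)
      (t := hb.toFinset.image (Quotient.mk S)) (fun i hi => Finset.mem_image_of_mem _ hi)]
  refine Finset.sum_eq_zero fun c hc => ?_
  obtain ⟨t₀, ht₀, rfl⟩ := Finset.mem_image.1 hc
  have hcongr : ∀ i ∈ hb.toFinset.filter (fun i => Quotient.mk S i = Quotient.mk S t₀),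
      F (Quotient.mk S i) (b i) = F (Quotient.mk S t₀) (b i) := fun i hi => by
    rw [(Finset.mem_filter.1 hi).2]
  rw [Finset.sum_congr rfl hcongr, ← map_sum]
  have hkey : (∑ i ∈ hb.toFinset.filter (fun i => Quotient.mk S i = Quotient.mk S t₀), b i)
      = ∑ᶠ (t : H) (_ : S.r t t₀), b t := by
    rw [show (∑ᶠ (t : H) (_ : S.r t t₀), b t) = ∑ᶠ t ∈ {t : H | S.r t t₀}, b t from rfl,
      finsum_mem_eq_sum_of_inter_support_eq b]
    ext t
    simp only [Set.mem_inter_iff, Set.mem_setOf_eq, Function.mem_support, Finset.coe_filter,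
      Set.Finite.mem_toFinset]
    constructor
    · rintro ⟨h1, h2⟩; exact ⟨⟨h2, Quotient.eq''.2 h1⟩, h2⟩
    · rintro ⟨⟨_, h1⟩, h2⟩; exact ⟨Quotient.eq''.1 h1, h2⟩
  rw [hkey, hsum t₀, map_zero]

variable {G : Type*} [Category G] {A : G → Type*} [∀ e, Ring (A e)]

lemma comp_support_finite (z : CP A) (e f : G) (g : (e ⟶ f) → A f)
    (hg : ∀ t, z ⟨e, f, t⟩ = 0 → g t = 0) : (Function.support g).Finite := by
  classical
  have : Function.support g ⊆ (fun t : e ⟶ f => (⟨e, f, t⟩ : CMor G)) ⁻¹' ↑z.support := by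
    intro t ht
    simp only [Set.mem_preimage, Finset.coe_sort_coe, Finset.mem_coe, DFinsupp.mem_support_iff]
    intro h0
    exact ht (hg t h0)
  refine Set.Finite.subset (Set.Finite.preimage ?_ z.support.finite_toSet) this
  intro a _ b _ h
  simpa using h

open Classical in
lemma smap_add (R : ∀ e f : G, (e ⟶ f) → (e ⟶ f) → Prop)
    (e f : G) (s₀ : e ⟶ f) (z w : CP A) :
    (∑ᶠ (t : e ⟶ f) (_ : R e f t s₀), (z + w : CP A) ⟨e, f, t⟩ : A f)
      = (∑ᶠ (t : e ⟶ f) (_ : R e f t s₀), z ⟨e, f, t⟩ : A f)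
        + (∑ᶠ (t : e ⟶ f) (_ : R e f t s₀), w ⟨e, f, t⟩ : A f) := by
  have h1 : ∀ (u : CP A), (∑ᶠ (t : e ⟶ f) (_ : R e f t s₀), u ⟨e, f, t⟩)
      = ∑ᶠ t : e ⟶ f, (if R e f t s₀ then u ⟨e, f, t⟩ else 0 : A f) :=
    fun u => finsum_congr fun t => by rw [finsum_eq_if]
  rw [h1 (z + w : CP A), h1 z, h1 w, ← finsum_add_distrib
    (comp_support_finite z e f _ (fun t h0 => by simp [h0]))
    (comp_support_finite w e f _ (fun t h0 => by simp [h0]))]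
  refine finsum_congr fun t => ?_
  rw [DFinsupp.add_apply]
  split_ifs <;> simp

open Classical in
/-- The sum of coefficients of `z` over the congruence class of `s₀`, as an
additive monoid hom. -/
noncomputable def Smap (R : ∀ e f : G, (e ⟶ f) → (e ⟶ f) → Prop)
    (e f : G) (s₀ : e ⟶ f) : CP A →+ A f where
  toFun z := ∑ᶠ (t : e ⟶ f) (_ : R e f t s₀), z ⟨e, f, t⟩
  map_zero' := by simp
  map_add' z w := smap_add R e f s₀ z w

lemma Smap_apply (R : ∀ e f : G, (e ⟶ f) → (e ⟶ f) → Prop)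
    (e f : G) (s₀ : e ⟶ f) (z : CP A) :
    Smap R e f s₀ z = ∑ᶠ (t : e ⟶ f) (_ : R e f t s₀), z ⟨e, f, t⟩ := rfl

open Classical in
lemma Smap_single_same (R : ∀ e f : G, (e ⟶ f) → (e ⟶ f) → Prop)
    (e f : G) (s₀ : e ⟶ f) (u : e ⟶ f) (a : A f) :
    Smap R e f s₀ (DFinsupp.single (⟨e, f, u⟩ : CMor G) a) = if R e f u s₀ then a else 0 := by
  rw [Smap_apply, finsum_eq_single _ u]
  · rw [DFinsupp.single_eq_same, finsum_eq_if]
  · intro t ht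
    rw [DFinsupp.single_eq_of_ne (by simpa using fun h => (ht h).elim)]
    simp

open Classical in
lemma Smap_single_ne (R : ∀ e f : G, (e ⟶ f) → (e ⟶ f) → Prop)
    (e f : G) (s₀ : e ⟶ f) (m : CMor G) (a : A m.2.1)
    (hm : ∀ t : e ⟶ f, m ≠ ⟨e, f, t⟩) :
    Smap R e f s₀ (DFinsupp.single m a) = 0 := by
  rw [Smap_apply]
  refine finsum_eq_zero_of_forall_eq_zero fun t => ?_
  rw [DFinsupp.single_eq_of_ne (hm t).symm]
  simp

open Classical in
lemma Smap_catMul (σ : ∀ e f : G, (e ⟶ f) → (A e →+* A f))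
    (α : ∀ e f g : G, (f ⟶ g) → (e ⟶ f) → A g)
    (R : ∀ e f : G, (e ⟶ f) → (e ⟶ f) → Prop)
    (e f : G) (s₀ : e ⟶ f) (x y : CP A) :
    Smap R e f s₀ (catMul σ α x y) = ∑ p ∈ x.support, ∑ q ∈ y.support,
      (if h : q.2.1 = p.1 then
        Smap R e f s₀ (DFinsupp.single (⟨q.1, p.2.1, (q.2.2 ≫ eqToHom h) ≫ p.2.2⟩ : CMor G)
          (x p * σ p.1 p.2.1 p.2.2 (castRH A h (y q))
            * α q.1 p.1 p.2.1 p.2.2 (q.2.2 ≫ eqToHom h)))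
      else 0) := by
  rw [catMul, DFinsupp.sum, map_sum]
  refine Finset.sum_congr rfl fun p _ => ?_
  rw [DFinsupp.sum, map_sum]
  refine Finset.sum_congr rfl fun q _ => ?_
  split_ifs with h
  · rfl
  · exact map_zero _


lemma castRH_rfl {e : G} : castRH A (rfl : e = e) = RingHom.id (A e) := rfl

open Classical in
lemma Smap_catMul_left (σ : ∀ e f : G, (e ⟶ f) → (A e →+* A f))
    (α : ∀ e f g : G, (f ⟶ g) → (e ⟶ f) → A g)
    (R : ∀ e f : G, (e ⟶ f) → (e ⟶ f) → Prop)
    (hRrefl : ∀ (e f : G) (s : e ⟶ f), R e f s s)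
    (hRsymm : ∀ (e f : G) (s t : e ⟶ f), R e f s t → R e f t s)
    (hRtrans : ∀ (e f : G) (s t r : e ⟶ f), R e f s t → R e f t r → R e f s r)
    (hRcomp : ∀ (e f g : G) (s s' : e ⟶ f) (t t' : f ⟶ g),
      R e f s s' → R f g t t' → R e g (s ≫ t) (s' ≫ t'))
    (hαR : ∀ (e f g : G) (s s' : f ⟶ g) (t t' : e ⟶ f),
      R f g s s' → R e f t t' → α e f g s t = α e f g s' t')
    (e f : G) (s₀ : e ⟶ f) (r z : CP A)
    (hz : ∀ (e' f' : G) (s : e' ⟶ f'),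
      (∑ᶠ (t : e' ⟶ f') (_ : R e' f' t s), z ⟨e', f', t⟩ : A f') = 0) :
    Smap R e f s₀ (catMul σ α r z) = 0 := by
  rw [Smap_catMul]
  refine Finset.sum_eq_zero fun p _ => ?_
  obtain ⟨e₁, f₁, pm⟩ := p
  by_cases hf : f = f₁
  case neg =>
    refine Finset.sum_eq_zero fun q _ => ?_
    split_ifs with h
    · exact Smap_single_ne _ _ _ _ _ _
        (fun t hne => hf (congrArg (fun m : CMor G => m.2.1) hne).symm)
    · rfl
  case pos =>
    subst hf
    set g : CMor G → A f := fun q =>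
      if h : q.2.1 = e₁ then
        Smap R e f s₀ (DFinsupp.single (⟨q.1, f, (q.2.2 ≫ eqToHom h) ≫ pm⟩ : CMor G)
          ((r ⟨e₁, f, pm⟩ : A f) * σ e₁ f pm (castRH A h (z q))
            * α q.1 e₁ f pm (q.2.2 ≫ eqToHom h)))
      else 0 with hgdef
    show (∑ q ∈ z.support, g q) = 0
    have hg0 : ∀ q : CMor G, z q = 0 → g q = 0 := by
      intro q h0
      rw [hgdef]
      dsimp only
      split_ifs with h
      · rw [h0]
        simp
      · rfl
    have hsub : Function.support g ⊆ ↑z.support := by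
      intro q hq
      simp only [Finset.mem_coe, DFinsupp.mem_support_iff]
      intro h0
      exact hq (hg0 q h0)
    rw [← finsum_eq_sum_of_support_subset g (by exact_mod_cast hsub)]
    set ι : (e ⟶ e₁) → CMor G := fun v => ⟨e, e₁, v⟩ with hιdef
    have hι : Function.Injective ι := by
      intro a b h
      simpa [hιdef] using h
    have hrange : Function.support g ⊆ Set.range ι := by
      intro q hq
      obtain ⟨e₂, d₂, w⟩ := q
      simp only [Function.mem_support, hgdef] at hq
      by_cases h : d₂ = e₁
      · subst h
        rw [dif_pos rfl] at hq
        by_cases he : e₂ = e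
        · subst he
          exact ⟨w, rfl⟩
        · exact absurd (Smap_single_ne _ _ _ _ _ _
            (fun t hne => he (congrArg (fun m : CMor G => m.1) hne))) hq
      · exact absurd (dif_neg h) hq
    rw [← finsum_mem_univ, finsum_mem_inter_support_eq g Set.univ (Set.range ι)
      (by rw [Set.univ_inter, (Set.inter_eq_right.mpr hrange)]), finsum_mem_range hι]
    set S₁ : Setoid (e ⟶ e₁) :=
      ⟨fun a b => R e e₁ a b,
        ⟨fun a => hRrefl _ _ a, fun h => hRsymm _ _ _ _ h, fun h h' => hRtrans _ _ _ _ _ h h'⟩⟩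
      with hS₁
    set b : (e ⟶ e₁) → A e₁ := fun v => z ⟨e, e₁, v⟩ with hbdef
    set Fv : (e ⟶ e₁) → (A e₁ →+ A f) := fun v =>
      { toFun := fun m => if R e f (v ≫ pm) s₀ then
            (r ⟨e₁, f, pm⟩ : A f) * σ e₁ f pm m * α e e₁ f pm v else 0,
        map_zero' := by split_ifs <;> simp,
        map_add' := by intro m m'; split_ifs <;> simp [mul_add, add_mul] } with hFv
    have hresp : ∀ v v' : e ⟶ e₁, S₁.r v v' → Fv v = Fv v' := by
      intro v v' hvv'
      have h1 := hRcomp e e₁ f v v' pm pm hvv' (hRrefl _ _ pm)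
      have hc : R e f (v ≫ pm) s₀ ↔ R e f (v' ≫ pm) s₀ :=
        ⟨fun h => hRtrans _ _ _ _ _ (hRsymm _ _ _ _ h1) h, fun h => hRtrans _ _ _ _ _ h1 h⟩
      have hα := hαR e e₁ f pm pm v v' (hRrefl _ _ pm) hvv'
      refine AddMonoidHom.ext fun m => ?_
      simp only [hFv, AddMonoidHom.coe_mk, ZeroHom.coe_mk]
      rw [hα]
      exact if_congr hc rfl rfl
    have key : ∀ v : e ⟶ e₁, g (ι v) = (Quotient.lift Fv hresp) (Quotient.mk S₁ v) (b v) := by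
      intro v
      rw [hgdef]
      dsimp only [hιdef]
      rw [dif_pos rfl]
      simp only [eqToHom_refl, Category.comp_id, castRH_rfl, RingHom.id_apply]
      rw [Smap_single_same]
      simp only [Category.comp_id]
      rfl
    rw [finsum_congr key]
    exact classSum_kill S₁ b
      (comp_support_finite z e e₁ b (fun t h0 => h0))
      (fun s => hz e e₁ s) (Quotient.lift Fv hresp)


open Classical in
lemma Smap_catMul_right (σ : ∀ e f : G, (e ⟶ f) → (A e →+* A f))
    (α : ∀ e f g : G, (f ⟶ g) → (e ⟶ f) → A g)
    (R : ∀ e f : G, (e ⟶ f) → (e ⟶ f) → Prop)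
    (hRrefl : ∀ (e f : G) (s : e ⟶ f), R e f s s)
    (hRsymm : ∀ (e f : G) (s t : e ⟶ f), R e f s t → R e f t s)
    (hRtrans : ∀ (e f : G) (s t r : e ⟶ f), R e f s t → R e f t r → R e f s r)
    (hRcomp : ∀ (e f g : G) (s s' : e ⟶ f) (t t' : f ⟶ g),
      R e f s s' → R f g t t' → R e g (s ≫ t) (s' ≫ t'))
    (hσR : ∀ (e f : G) (s t : e ⟶ f), R e f s t → σ e f s = σ e f t)
    (hαR : ∀ (e f g : G) (s s' : f ⟶ g) (t t' : e ⟶ f),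
      R f g s s' → R e f t t' → α e f g s t = α e f g s' t')
    (e f : G) (s₀ : e ⟶ f) (r z : CP A)
    (hz : ∀ (e' f' : G) (s : e' ⟶ f'),
      (∑ᶠ (t : e' ⟶ f') (_ : R e' f' t s), z ⟨e', f', t⟩ : A f') = 0) :
    Smap R e f s₀ (catMul σ α z r) = 0 := by
  rw [Smap_catMul, Finset.sum_comm]
  refine Finset.sum_eq_zero fun q _ => ?_
  obtain ⟨e₂, d₂, w⟩ := q
  by_cases he : e = e₂
  case neg =>
    refine Finset.sum_eq_zero fun p _ => ?_
    split_ifs with h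
    · exact Smap_single_ne _ _ _ _ _ _
        (fun t hne => he (congrArg (fun m : CMor G => m.1) hne).symm)
    · rfl
  case pos =>
    subst he
    set g : CMor G → A f := fun p =>
      if h : d₂ = p.1 then
        Smap R e f s₀ (DFinsupp.single (⟨e, p.2.1, (w ≫ eqToHom h) ≫ p.2.2⟩ : CMor G)
          ((z p : A p.2.1) * σ p.1 p.2.1 p.2.2 (castRH A h (r ⟨e, d₂, w⟩))
            * α e p.1 p.2.1 p.2.2 (w ≫ eqToHom h)))
      else 0 with hgdef
    show (∑ p ∈ z.support, g p) = 0
    have hg0 : ∀ p : CMor G, z p = 0 → g p = 0 := by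
      intro p h0
      rw [hgdef]
      dsimp only
      split_ifs with h
      · rw [h0]
        simp
      · rfl
    have hsub : Function.support g ⊆ ↑z.support := by
      intro p hp
      simp only [Finset.mem_coe, DFinsupp.mem_support_iff]
      intro h0
      exact hp (hg0 p h0)
    rw [← finsum_eq_sum_of_support_subset g (by exact_mod_cast hsub)]
    set ι : (d₂ ⟶ f) → CMor G := fun v => ⟨d₂, f, v⟩ with hιdef
    have hι : Function.Injective ι := by
      intro a b h
      simpa [hιdef] using h
    have hrange : Function.support g ⊆ Set.range ι := by
      intro p hp
      obtain ⟨e₃, f₃, pm⟩ := p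
      simp only [Function.mem_support, hgdef] at hp
      by_cases h : d₂ = e₃
      · subst h
        rw [dif_pos rfl] at hp
        by_cases hf3 : f = f₃
        · subst hf3
          exact ⟨pm, rfl⟩
        · exact absurd (Smap_single_ne _ _ _ _ _ _
            (fun t hne => hf3 (congrArg (fun m : CMor G => m.2.1) hne).symm)) hp
      · exact absurd (dif_neg h) hp
    rw [← finsum_mem_univ, finsum_mem_inter_support_eq g Set.univ (Set.range ι)
      (by rw [Set.univ_inter, (Set.inter_eq_right.mpr hrange)]), finsum_mem_range hι]
    set S₁ : Setoid (d₂ ⟶ f) :=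
      ⟨fun a b => R d₂ f a b,
        ⟨fun a => hRrefl _ _ a, fun h => hRsymm _ _ _ _ h, fun h h' => hRtrans _ _ _ _ _ h h'⟩⟩
      with hS₁
    set b : (d₂ ⟶ f) → A f := fun v => z ⟨d₂, f, v⟩ with hbdef
    set Fv : (d₂ ⟶ f) → (A f →+ A f) := fun v =>
      { toFun := fun m => if R e f (w ≫ v) s₀ then
            m * σ d₂ f v (r ⟨e, d₂, w⟩) * α e d₂ f v w else 0,
        map_zero' := by split_ifs <;> simp,
        map_add' := by intro m m'; split_ifs <;> simp [mul_add, add_mul] } with hFv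
    have hresp : ∀ v v' : d₂ ⟶ f, S₁.r v v' → Fv v = Fv v' := by
      intro v v' hvv'
      have h1 := hRcomp e d₂ f w w v v' (hRrefl _ _ w) hvv'
      have hc : R e f (w ≫ v) s₀ ↔ R e f (w ≫ v') s₀ :=
        ⟨fun h => hRtrans _ _ _ _ _ (hRsymm _ _ _ _ h1) h, fun h => hRtrans _ _ _ _ _ h1 h⟩
      have hα := hαR e d₂ f v v' w w hvv' (hRrefl _ _ w)
      have hσ := hσR d₂ f v v' hvv'
      refine AddMonoidHom.ext fun m => ?_
      simp only [hFv, AddMonoidHom.coe_mk, ZeroHom.coe_mk]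
      rw [hα, hσ]
      exact if_congr hc rfl rfl
    have key : ∀ v : d₂ ⟶ f, g (ι v) = (Quotient.lift Fv hresp) (Quotient.mk S₁ v) (b v) := by
      intro v
      rw [hgdef]
      dsimp only [hιdef]
      rw [dif_pos rfl]
      simp only [eqToHom_refl, Category.comp_id, castRH_rfl, RingHom.id_apply]
      rw [Smap_single_same]
      simp only [Category.comp_id]
      rfl
    rw [finsum_congr key]
    exact classSum_kill S₁ b
      (comp_support_finite z d₂ f b (fun t h0 => h0))
      (fun s => hz d₂ f s) (Quotient.lift Fv hresp)



end Aux

/-- suppose `σ` is a functor and `R` is a congruence relation on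
`G` such that `σ` and `α` descend to the quotient category `G/R` (giving a
crossed system on `G/R`). If `I` is the twosided ideal of `A ⋊_α^σ G` generated
by an element `Σ a_s u_s` with `a_s = 0` whenever `s` is not congruent to an
identity morphism, and `Σ_{s ∈ [e]} a_s = 0` for every object `e`, then
`A ∩ I = {0}`. -/
theorem generated_ideal_trivial_coefficient_intersection
    {G : Type*} [Category G] [Finite G] {A : G → Type*} [∀ e, Ring (A e)]
    (σ : ∀ e f : G, (e ⟶ f) → (A e →+* A f))
    (α : ∀ e f g : G, (f ⟶ g) → (e ⟶ f) → A g)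
    (hσ1 : ∀ e : G, σ e e (𝟙 e) = RingHom.id (A e))
    (hα1r : ∀ (e f : G) (s : e ⟶ f), α e e f s (𝟙 e) = 1)
    (hα1l : ∀ (e f : G) (s : e ⟶ f), α e f f (𝟙 f) s = 1)
    (hcoc : ∀ (e f g h : G) (s : g ⟶ h) (t : f ⟶ g) (r : e ⟶ f),
      α f g h s t * α e f h (t ≫ s) r = σ g h s (α e f g t r) * α e g h s (r ≫ t))
    (htw : ∀ (e f g : G) (s : f ⟶ g) (t : e ⟶ f) (a : A e),
      σ f g s (σ e f t a) * α e f g s t = α e f g s t * σ e g (t ≫ s) a)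
    (hσcomp : ∀ (e f g : G) (s : e ⟶ f) (t : f ⟶ g),
      σ e g (s ≫ t) = (σ f g t).comp (σ e f s))
    (R : ∀ e f : G, (e ⟶ f) → (e ⟶ f) → Prop)
    (hRrefl : ∀ (e f : G) (s : e ⟶ f), R e f s s)
    (hRsymm : ∀ (e f : G) (s t : e ⟶ f), R e f s t → R e f t s)
    (hRtrans : ∀ (e f : G) (s t r : e ⟶ f), R e f s t → R e f t r → R e f s r)
    (hRcomp : ∀ (e f g : G) (s s' : e ⟶ f) (t t' : f ⟶ g),
      R e f s s' → R f g t t' → R e g (s ≫ t) (s' ≫ t'))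
    (hσR : ∀ (e f : G) (s t : e ⟶ f), R e f s t → σ e f s = σ e f t)
    (hαR : ∀ (e f g : G) (s s' : f ⟶ g) (t t' : e ⟶ f),
      R f g s s' → R e f t t' → α e f g s t = α e f g s' t')
    (I : Set (CP A)) (x : CP A)
    (hI : IsCrossedIdeal σ α I) (hxI : x ∈ I)
    (hImin : ∀ J : Set (CP A), IsCrossedIdeal σ α J → x ∈ J → I ⊆ J)
    (hsupp : ∀ p : CMor G, x p ≠ 0 →
      ∃ h : p.1 = p.2.1, R p.1 p.1 (p.2.2 ≫ eqToHom h.symm) (𝟙 p.1))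
    (hsum : ∀ e : G, (∑ᶠ (s : e ⟶ e) (_ : R e e s (𝟙 e)), x ⟨e, e, s⟩) = 0) :
    ∀ y ∈ I, (∀ p : CMor G, (∀ e : G, p ≠ ⟨e, e, 𝟙 e⟩) → y p = 0) → y = 0 := by
  classical
  intro y hyI hy
  set J : Set (CP A) := {z | ∀ (e f : G) (s₀ : e ⟶ f), Smap R e f s₀ z = 0} with hJdef
  have hJideal : IsCrossedIdeal σ α J := by
    refine ⟨fun e f s₀ => map_zero _,
      fun z w hz hw e f s₀ => by rw [map_add, hz e f s₀, hw e f s₀, add_zero],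
      fun z hz e f s₀ => by rw [map_neg, hz e f s₀, neg_zero],
      fun z r hz => ⟨fun e f s₀ => ?_, fun e f s₀ => ?_⟩⟩
    · exact Smap_catMul_left σ α R hRrefl hRsymm hRtrans hRcomp hαR e f s₀ r z
        (fun e' f' s => hz e' f' s)
    · exact Smap_catMul_right σ α R hRrefl hRsymm hRtrans hRcomp hσR hαR e f s₀ r z
        (fun e' f' s => hz e' f' s)
  have hxJ : x ∈ J := by
    intro e f s₀
    rw [Smap_apply]
    by_cases he : e = f
    case neg =>
      refine finsum_eq_zero_of_forall_eq_zero fun t => ?_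
      have hx0 : x ⟨e, f, t⟩ = 0 := by
        by_contra h0
        exact he (hsupp ⟨e, f, t⟩ h0).1
      rw [hx0]
      simp
    case pos =>
      subst he
      by_cases hid : R e e s₀ (𝟙 e)
      case pos =>
        have hiff : ∀ t : e ⟶ e, R e e t s₀ ↔ R e e t (𝟙 e) :=
          fun t => ⟨fun h => hRtrans _ _ _ _ _ h hid,
            fun h => hRtrans _ _ _ _ _ h (hRsymm _ _ _ _ hid)⟩
        calc (∑ᶠ (t : e ⟶ e) (_ : R e e t s₀), x ⟨e, e, t⟩ : A e)
            = (∑ᶠ (t : e ⟶ e) (_ : R e e t (𝟙 e)), x ⟨e, e, t⟩ : A e) :=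
              finsum_congr fun t => by
                rw [finsum_eq_if, finsum_eq_if]
                exact if_congr (hiff t) rfl rfl
          _ = 0 := hsum e
      case neg =>
        refine finsum_eq_zero_of_forall_eq_zero fun t => ?_
        by_cases hRt : R e e t s₀
        case neg => rw [finsum_eq_if, if_neg hRt]
        case pos =>
          have hx0 : x ⟨e, e, t⟩ = 0 := by
            by_contra h0
            obtain ⟨h, hR⟩ := hsupp ⟨e, e, t⟩ h0
            have hR' : R e e t (𝟙 e) := by
              have ht : t ≫ eqToHom h.symm = t := by simp
              rwa [ht] at hR
            exact hid (hRtrans _ _ _ _ _ (hRsymm _ _ _ _ hRt) hR')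
          rw [hx0]
          simp
  have hyJ : y ∈ J := hImin J hJideal hxJ hyI
  ext p
  rw [DFinsupp.zero_apply]
  by_cases hp : ∀ e : G, p ≠ ⟨e, e, 𝟙 e⟩
  case pos => exact hy p hp
  case neg =>
    push_neg at hp
    obtain ⟨e, rfl⟩ := hp
    have hsm := hyJ e e (𝟙 e)
    rw [Smap_apply, finsum_eq_single _ (𝟙 e) ?side] at hsm
    · rwa [finsum_eq_if, if_pos (hRrefl e e (𝟙 e))] at hsm
    case side =>
      intro t hne
      have hy0 : y ⟨e, e, t⟩ = 0 := by
        refine hy ⟨e, e, t⟩ fun e' heq => ?_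
        have h1 : e = e' := congrArg (fun m : CMor G => m.1) heq
        subst h1
        exact hne (by simpa using heq)
      rw [hy0]
      simp
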